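/- For 0 < α < 1 and real u > 0, v > 0, h > 0: ∫_0^∞ x^{h-1} exp(-u x^α - v x) dx = v^{-h} · 𝕃_{α,h}(u/v^α). -/

import Mathlib

open MeasureTheory Real

private lemma real_exp_tsum (x : ℝ) : Real.exp x = ∑' n : ℕ, x ^ n / n.factorial := by
  rw [Real.exp_eq_exp_ℝ, NormedSpace.exp_eq_tsum_div]

/-- Lemma 1.2 (case `0 < α < 1`): for `u, v, h > 0`,
`∫_0^∞ x^{h-1} exp(-u x^α - v x) dx = v^{-h} 𝕃_{α,h}(u/v^α)`. -/
theorem stmt_2 (α u v h : ℝ) (hα0 : 0 < α) (hα1 : α < 1)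
    (hu : 0 < u) (hv : 0 < v) (hh : 0 < h) :
    ∫ x in Set.Ioi (0 : ℝ), x ^ (h - 1) * Real.exp (-u * x ^ α - v * x)
      = v ^ (-h) *
        ∑' n : ℕ, ((-1 : ℝ) ^ n * Real.Gamma (α * n + h) / (n.factorial : ℝ)) * (u / v ^ α) ^ n := by
  -- the summand functions
  set f : ℕ → ℝ → ℝ :=
    fun n x => ((-u) ^ n / n.factorial) * (x ^ (α * n + h - 1) * Real.exp (-(v * x))) with hf
  have hrpowCont : ∀ c : ℝ, ContinuousOn (fun x : ℝ => x ^ c) (Set.Ioi 0) :=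
    fun c => continuousOn_id.rpow_const (fun x hx => Or.inl (ne_of_gt hx))
  have hmeas : ∀ n : ℕ, AEStronglyMeasurable (f n) (volume.restrict (Set.Ioi 0)) := by
    intro n
    refine (ContinuousOn.aestronglyMeasurable ?_ measurableSet_Ioi)
    exact continuousOn_const.mul ((hrpowCont _).mul
      ((Real.continuous_exp.comp (continuous_const.mul continuous_id).neg).continuousOn))
  -- a dominating function
  set g : ℝ → ℝ := fun x => x ^ (h - 1) * Real.exp (u * x ^ α - v * x) with hg
  -- a constant K with u x^α ≤ K + (v/2) x for all x > 0
  obtain ⟨K, hK⟩ : ∃ K : ℝ, ∀ x : ℝ, 0 < x → u * x ^ α ≤ K + (v / 2) * x := by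
    have h0 : Filter.Tendsto (fun x : ℝ => u * x ^ (-(1 - α))) Filter.atTop (nhds (u * 0)) :=
      (tendsto_rpow_neg_atTop (by linarith)).const_mul u
    rw [mul_zero] at h0
    have h1 : ∀ᶠ x : ℝ in Filter.atTop, u * x ^ (-(1 - α)) ≤ v / 2 :=
      h0.eventually_le_const (by positivity)
    obtain ⟨M, hM⟩ := h1.exists_forall_of_atTop
    set N : ℝ := max M 1 with hN
    have hN1 : (1 : ℝ) ≤ N := le_max_right _ _
    have hN0 : (0 : ℝ) < N := by linarith
    refine ⟨u * N ^ α, fun x hx => ?_⟩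
    rcases le_or_gt x N with hxN | hxN
    · have : u * x ^ α ≤ u * N ^ α :=
        mul_le_mul_of_nonneg_left (Real.rpow_le_rpow hx.le hxN hα0.le) hu.le
      nlinarith [mul_pos (half_pos hv) hx]
    · have hM1 : u * x ^ (-(1 - α)) ≤ v / 2 := hM x (le_trans (le_max_left M 1) hxN.le)
      have hxpos : (0 : ℝ) < x := lt_trans hN0 hxN
      have hrw : u * x ^ α = (u * x ^ (-(1 - α))) * x := by
        rw [mul_assoc, ← Real.rpow_add_one hxpos.ne']
        ring_nf
      rw [hrw]
      have h2 : (u * x ^ (-(1 - α))) * x ≤ (v / 2) * x :=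
        mul_le_mul_of_nonneg_right hM1 hxpos.le
      nlinarith [mul_pos hu (Real.rpow_pos_of_pos hN0 α)]
  -- g is integrable on Ioi 0
  have hg_int : IntegrableOn g (Set.Ioi (0 : ℝ)) := by
    have hmaj : IntegrableOn (fun x : ℝ => Real.exp K * (x ^ (h - 1) * Real.exp (-(v / 2) * x)))
        (Set.Ioi (0 : ℝ)) := by
      have := (integrableOn_rpow_mul_exp_neg_mul_rpow (p := 1) (s := h - 1) (b := v / 2)
        (by linarith) zero_lt_one (by positivity)).const_mul (Real.exp K)
      simpa [IntegrableOn] using this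
    refine hmaj.mono' ?_ ?_
    · refine (ContinuousOn.aestronglyMeasurable ?_ measurableSet_Ioi)
      exact (hrpowCont _).mul (Real.continuous_exp.comp_continuousOn
        (((continuousOn_const.mul (hrpowCont _)).sub
          (continuous_const.mul continuous_id).continuousOn)))
    · filter_upwards [self_mem_ae_restrict measurableSet_Ioi] with x hx
      have hx0 : (0 : ℝ) < x := hx
      have h1 : u * x ^ α - v * x ≤ K + (-(v / 2) * x) := by
        have := hK x hx0; nlinarith
      have hb : g x ≤ Real.exp K * (x ^ (h - 1) * Real.exp (-(v / 2) * x)) := by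
        show x ^ (h - 1) * Real.exp (u * x ^ α - v * x) ≤ _
        calc x ^ (h - 1) * Real.exp (u * x ^ α - v * x)
            ≤ x ^ (h - 1) * Real.exp (K + (-(v / 2) * x)) := by
              apply mul_le_mul_of_nonneg_left (Real.exp_le_exp.mpr h1)
                (Real.rpow_nonneg hx0.le _)
          _ = Real.exp K * (x ^ (h - 1) * Real.exp (-(v / 2) * x)) := by
              rw [Real.exp_add]; ring
      have hgx : (0 : ℝ) ≤ g x := by
        show (0:ℝ) ≤ x ^ (h - 1) * Real.exp (u * x ^ α - v * x); positivity
      rw [Real.norm_of_nonneg hgx]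
      exact hb
  -- pointwise facts on Ioi 0
  have hterm : ∀ x : ℝ, 0 < x → ∀ n : ℕ,
      f n x = (x ^ (h - 1) * Real.exp (-(v * x))) * ((-u * x ^ α) ^ n / n.factorial) := by
    intro x hx n
    have hxpow : x ^ (α * n + h - 1) = (x ^ α) ^ n * x ^ (h - 1) := by
      rw [show α * n + h - 1 = α * n + (h - 1) by ring, Real.rpow_add hx,
        Real.rpow_mul hx.le, Real.rpow_natCast]
    show ((-u) ^ n / n.factorial) * (x ^ (α * n + h - 1) * Real.exp (-(v * x))) = _
    rw [hxpow, ← neg_mul, mul_pow]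
    ring
  have habs : ∀ x : ℝ, 0 < x → ∀ n : ℕ,
      ‖f n x‖ = (x ^ (h - 1) * Real.exp (-(v * x))) * ((u * x ^ α) ^ n / n.factorial) := by
    intro x hx n
    rw [hterm x hx n, norm_mul, Real.norm_of_nonneg (by positivity), norm_div,
      Real.norm_natCast, norm_pow, neg_mul, norm_neg,
      Real.norm_of_nonneg (by positivity)]
  have hsummable : ∀ x : ℝ, 0 < x → Summable (fun n => ‖f n x‖) := by
    intro x hx
    apply Summable.of_nonneg_of_le (fun n => norm_nonneg _)
      (fun n => le_of_eq (habs x hx n))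
    exact ((Real.summable_pow_div_factorial (u * x ^ α)).mul_left _)
  have habs_sum : ∀ x : ℝ, 0 < x → ∑' n, ‖f n x‖ = g x := by
    intro x hx
    have h1 : ∑' n, ‖f n x‖
        = (x ^ (h - 1) * Real.exp (-(v * x))) * ∑' n : ℕ, (u * x ^ α) ^ n / n.factorial := by
      rw [← tsum_mul_left]; exact tsum_congr (habs x hx)
    show _ = x ^ (h - 1) * Real.exp (u * x ^ α - v * x)
    rw [h1, ← real_exp_tsum, mul_assoc, ← Real.exp_add,
      show -(v * x) + u * x ^ α = u * x ^ α - v * x by ring]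
  have hsum_eq : ∀ x : ℝ, 0 < x →
      ∑' n, f n x = x ^ (h - 1) * Real.exp (-u * x ^ α - v * x) := by
    intro x hx
    have h1 : ∑' n, f n x
        = (x ^ (h - 1) * Real.exp (-(v * x))) * ∑' n : ℕ, (-u * x ^ α) ^ n / n.factorial := by
      rw [← tsum_mul_left]; exact tsum_congr (hterm x hx)
    rw [h1, ← real_exp_tsum, mul_assoc, ← Real.exp_add,
      show -(v * x) + -u * x ^ α = -u * x ^ α - v * x by ring]
  -- the key lintegral bound
  have hlint : ∑' n, ∫⁻ x in Set.Ioi (0 : ℝ), ‖f n x‖₊ ∂volume ≠ ⊤ := by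
    rw [← lintegral_tsum (fun n => ((hmeas n).aemeasurable.nnnorm.coe_nnreal_ennreal))]
    have heq : ∫⁻ x in Set.Ioi (0 : ℝ), ∑' n, (‖f n x‖₊ : ENNReal) ∂volume
        = ∫⁻ x in Set.Ioi (0 : ℝ), ‖g x‖₊ ∂volume := by
      refine setLIntegral_congr_fun measurableSet_Ioi (
        (fun x hx => ?_))
      have h1 : ∀ n : ℕ, (‖f n x‖₊ : ENNReal) = ENNReal.ofReal ‖f n x‖ := by
        intro n; rw [ofReal_norm, enorm_eq_nnnorm]
      have hgx : (0 : ℝ) ≤ g x := by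
        show (0:ℝ) ≤ x ^ (h - 1) * Real.exp (u * x ^ α - v * x)
        have hx0 : (0:ℝ) < x := hx
        positivity
      simp_rw [h1]
      rw [← ENNReal.ofReal_tsum_of_nonneg (fun n => norm_nonneg _) (hsummable x hx),
        habs_sum x hx, ← enorm_eq_nnnorm, ← ofReal_norm, Real.norm_of_nonneg hgx]
    rw [heq]
    exact hg_int.2.ne
  -- swap integral and sum
  have hswap : ∫ x in Set.Ioi (0 : ℝ), ∑' n, f n x ∂volume
      = ∑' n, ∫ x in Set.Ioi (0 : ℝ), f n x ∂volume :=
    integral_tsum hmeas hlint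
  have hL : ∫ x in Set.Ioi (0 : ℝ), x ^ (h - 1) * Real.exp (-u * x ^ α - v * x)
      = ∑' n, ∫ x in Set.Ioi (0 : ℝ), f n x ∂volume := by
    rw [← hswap]
    exact setIntegral_congr_fun measurableSet_Ioi (fun x hx => (hsum_eq x hx).symm)
  rw [hL]
  -- compute each integral
  have hint : ∀ n : ℕ, ∫ x in Set.Ioi (0 : ℝ), f n x ∂volume
      = ((-u) ^ n / n.factorial) * ((1 / v) ^ (α * n + h) * Real.Gamma (α * n + h)) := by
    intro n
    show ∫ x in Set.Ioi (0 : ℝ),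
        ((-u) ^ n / n.factorial) * (x ^ (α * n + h - 1) * Real.exp (-(v * x))) ∂volume = _
    rw [MeasureTheory.integral_const_mul,
      integral_rpow_mul_exp_neg_mul_Ioi (by positivity) hv]
  simp_rw [hint]
  rw [← tsum_mul_left]
  refine tsum_congr (fun n => ?_)
  have hva : (0 : ℝ) < v ^ α := Real.rpow_pos_of_pos hv α
  have h1 : (1 / v : ℝ) ^ (α * n + h) = ((v ^ α) ^ n)⁻¹ * (v ^ h)⁻¹ := by
    rw [Real.rpow_add (by positivity), one_div, Real.inv_rpow hv.le, Real.inv_rpow hv.le,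
      Real.rpow_mul hv.le, Real.rpow_natCast]
  have h2 : v ^ (-h) = (v ^ h)⁻¹ := Real.rpow_neg hv.le h
  rw [h1, h2, div_pow, neg_pow]
  have hfac : (n.factorial : ℝ) ≠ 0 := Nat.cast_ne_zero.mpr n.factorial_ne_zero
  have hvan : ((v ^ α : ℝ) ^ n) ≠ 0 := by positivity
  have hvh : (v ^ h : ℝ) ≠ 0 := by positivity
  field_simp
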